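/- Let F : ℝⁿ → ℝᵐ satisfy the local tangential cone condition with constant η ∈ [0, 1/2), and suppose x⋆ ∈ ℝⁿ satisfies F(x⋆) = 0. Let x_k ∈ ℝⁿ be such that F'(x_k) has full column rank and every row ∇F_i(x_k) is nonzero, let i_k ∈ argmax_{1≤i≤m} |F_i(x_k)|², and define the maximum residual nonlinear Kaczmarz update x_{k+1} = x_k − (F_{i_k}(x_k) / ‖∇F_{i_k}(x_k)‖₂²) ∇F_{i_k}(x_k). Then ‖x_{k+1} − x⋆‖₂² ≤ (1 − (1−2η) / ((1+η)² m² κ_F²(F'(x_k)))) ‖x_k − x⋆‖₂², where κ_F(A) = ‖A‖_F / σ_min(A). -/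

import Mathlib

open Matrix

/-- The singular values of a real matrix `A`: square roots of the eigenvalues of `AᵀA`. -/
noncomputable def singVals {m' : Type*} [Fintype m'] {n : ℕ}
    (A : Matrix m' (Fin n) ℝ) : Fin n → ℝ :=
  fun j => Real.sqrt ((Matrix.isHermitian_conjTranspose_mul_self A).eigenvalues j)

/-- The smallest singular value of `A`. -/
noncomputable def sigmaMin {m' : Type*} [Fintype m'] {n : ℕ}
    (A : Matrix m' (Fin n) ℝ) : ℝ :=
  ⨅ j, singVals A j

/-- The Frobenius norm of `A`. -/
noncomputable def frobNorm {m' : Type*} [Fintype m'] {n : ℕ}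
    (A : Matrix m' (Fin n) ℝ) : ℝ :=
  Real.sqrt (∑ i, ∑ j, (A i j) ^ 2)

/-- The scaled condition number `κ_F(A) = ‖A‖_F / σ_min(A)`. -/
noncomputable def kappaF {m' : Type*} [Fintype m'] {n : ℕ}
    (A : Matrix m' (Fin n) ℝ) : ℝ :=
  frobNorm A / sigmaMin A

lemma rayleigh_aux {n : ℕ} {m' : Type*} [Fintype m'] (A : Matrix m' (Fin n) ℝ)
    (v : Fin n → ℝ) :
    sigmaMin A ^ 2 * (∑ j, v j ^ 2) ≤ ∑ i, ((A *ᵥ v) i) ^ 2 := by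
  classical
  set hM := Matrix.isHermitian_conjTranspose_mul_self A with hhM
  set eig := hM.eigenvalues with heig
  set U : Matrix (Fin n) (Fin n) ℝ := (hM.eigenvectorUnitary : Matrix (Fin n) (Fin n) ℝ) with hU
  set w : Fin n → ℝ := Uᵀ *ᵥ v with hw
  have hstarU : star U = Uᵀ := U.conjTranspose_eq_transpose_of_trivial
  have hUU : U * Uᵀ = 1 := by
    rw [← hstarU]; exact Unitary.mul_star_self_of_mem hM.eigenvectorUnitary.2
  have hdiag : Matrix.diagonal (RCLike.ofReal ∘ eig) = Matrix.diagonal eig := by congr 1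
  have h1 : ∑ i, ((A *ᵥ v) i) ^ 2 = ∑ j, eig j * (w j) ^ 2 := by
    calc ∑ i, ((A *ᵥ v) i) ^ 2 = (A *ᵥ v) ⬝ᵥ (A *ᵥ v) := by
          simp [dotProduct, sq]
      _ = v ⬝ᵥ ((Aᴴ * A) *ᵥ v) := by
          rw [Matrix.conjTranspose_eq_transpose_of_trivial, ← Matrix.mulVec_mulVec,
            Matrix.dotProduct_mulVec v, Matrix.vecMul_transpose]
      _ = v ⬝ᵥ ((U * Matrix.diagonal eig * star U) *ᵥ v) := by
          rw [← hdiag, hM.spectral_theorem, Unitary.conjStarAlgAut_apply]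
      _ = w ⬝ᵥ (Matrix.diagonal eig *ᵥ w) := by
          rw [hw, hstarU, ← Matrix.mulVec_mulVec, ← Matrix.mulVec_mulVec,
            Matrix.dotProduct_mulVec v, ← Matrix.mulVec_transpose]
      _ = ∑ j, eig j * (w j) ^ 2 := by
          simp only [dotProduct, Matrix.mulVec_diagonal]
          exact Finset.sum_congr rfl fun j _ => by ring
  have h2 : ∑ j, (w j) ^ 2 = ∑ j, v j ^ 2 := by
    calc ∑ j, (w j) ^ 2 = w ⬝ᵥ w := by simp [dotProduct, sq]
      _ = v ⬝ᵥ ((U * Uᵀ) *ᵥ v) := by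
          rw [hw, ← Matrix.mulVec_mulVec, Matrix.dotProduct_mulVec v,
            ← Matrix.mulVec_transpose]
      _ = ∑ j, v j ^ 2 := by
          rw [hUU, Matrix.one_mulVec]
          simp [dotProduct, sq]
  have h3 : ∀ j, sigmaMin A ^ 2 ≤ eig j := by
    intro j
    have h0 : 0 ≤ sigmaMin A := Real.iInf_nonneg fun j => Real.sqrt_nonneg _
    have h4 : sigmaMin A ≤ singVals A j := ciInf_le (Finite.bddBelow_range _) j
    calc sigmaMin A ^ 2 ≤ singVals A j ^ 2 := pow_le_pow_left₀ h0 h4 2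
      _ = eig j := Real.sq_sqrt (A.eigenvalues_conjTranspose_mul_self_nonneg j)
  rw [h1, ← h2, Finset.mul_sum]
  exact Finset.sum_le_sum fun j _ => mul_le_mul_of_nonneg_right (h3 j) (sq_nonneg _)

lemma sigmaMin_pos {n m : ℕ} (hn : 0 < n) (A : Matrix (Fin m) (Fin n) ℝ) (h : A.rank = n) :
    0 < sigmaMin A := by
  classical
  have hrk : (Aᴴ * A).rank = n := by
    rw [A.conjTranspose_eq_transpose_of_trivial, Matrix.rank_transpose_mul_self, h]
  have hM := Matrix.isHermitian_conjTranspose_mul_self A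
  have hcard : Fintype.card {j // hM.eigenvalues j ≠ 0} = n := by
    rw [← hM.rank_eq_card_non_zero_eigs, hrk]
  have hall : ∀ j, hM.eigenvalues j ≠ 0 := by
    intro j hj
    have := Fintype.card_subtype_lt (p := fun j => hM.eigenvalues j ≠ 0) (x := j) (fun h' => h' hj)
    rw [hcard, Fintype.card_fin] at this
    exact lt_irrefl _ this
  have hpos : ∀ j, 0 < singVals A j := fun j =>
    Real.sqrt_pos.mpr <| lt_of_le_of_ne (A.eigenvalues_conjTranspose_mul_self_nonneg j)
      (Ne.symm (hall j))
  have : Nonempty (Fin n) := ⟨⟨0, hn⟩⟩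
  obtain ⟨j0, hj0⟩ := Finite.exists_min (singVals A)
  exact lt_of_lt_of_le (hpos j0) (le_ciInf hj0)

set_option maxHeartbeats 1600000 in
/-- Theorem 2: one step of the maximum residual nonlinear Kaczmarz method,
`x_{k+1} = x_k − (F_{i_k}(x_k)/‖∇F_{i_k}(x_k)‖₂²) ∇F_{i_k}(x_k)` with
`i_k ∈ argmax_i |F_i(x_k)|²`, satisfies
`‖x_{k+1} − x⋆‖₂² ≤ (1 − (1−2η)/((1+η)² m² κ_F²(F'(x_k)))) ‖x_k − x⋆‖₂²`. -/
theorem mrnk_step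
    {n m : ℕ}
    (F : Fin m → EuclideanSpace ℝ (Fin n) → ℝ)
    (grad : Fin m → EuclideanSpace ℝ (Fin n) → EuclideanSpace ℝ (Fin n))
    (η : ℝ) (hη0 : 0 ≤ η) (hη : η < 1 / 2)
    -- F is differentiable with Jacobian whose i-th row is ∇F_i
    (hdiff : ∀ i x, HasGradientAt (F i) (grad i x) x)
    -- local tangential cone condition with constant η
    (hltcc : ∀ i (x₁ x₂ : EuclideanSpace ℝ (Fin n)),
      |F i x₁ - F i x₂ - ∑ j, grad i x₁ j * (x₁ j - x₂ j)| ≤ η * |F i x₁ - F i x₂|)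
    (xstar : EuclideanSpace ℝ (Fin n)) (hstar : ∀ i, F i xstar = 0)
    (xk : EuclideanSpace ℝ (Fin n))
    -- the full Jacobian F'(x_k)
    (J : Matrix (Fin m) (Fin n) ℝ)
    (hJdef : J = Matrix.of fun (i : Fin m) (j : Fin n) => grad i xk j)
    -- F'(x_k) has full column rank
    (hrank : J.rank = n)
    -- every row ∇F_i(x_k) is nonzero
    (hrows : ∀ i, grad i xk ≠ 0)
    -- i_k ∈ argmax_{1≤i≤m} |F_i(x_k)|²
    (ik : Fin m) (hik : ∀ i, (F i xk) ^ 2 ≤ (F ik xk) ^ 2)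
    (xk1 : EuclideanSpace ℝ (Fin n))
    -- maximum residual nonlinear Kaczmarz update
    (hupd : xk1 = xk - (F ik xk / ‖grad ik xk‖ ^ 2) • grad ik xk) :
    ‖xk1 - xstar‖ ^ 2
      ≤ (1 - (1 - 2 * η) / ((1 + η) ^ 2 * (m : ℝ) ^ 2 * kappaF J ^ 2))
          * ‖xk - xstar‖ ^ 2 := by
  classical
  have hm0 : (0:ℝ) < m := by exact_mod_cast ik.pos
  have hm1 : (1:ℝ) ≤ m := by exact_mod_cast ik.pos
  rcases Nat.eq_zero_or_pos n with hn0 | hn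
  · subst hn0
    have h1 : xk1 - xstar = 0 := by ext j; exact j.elim0
    have h2 : xk - xstar = 0 := by ext j; exact j.elim0
    have hσ : sigmaMin J = 0 := by
      rw [sigmaMin, Real.iInf_of_isEmpty]
    rw [h1, h2]
    simp [kappaF, hσ]
  -- main case
  set g := grad ik xk with hg
  have hgn : (0:ℝ) < ‖g‖ := norm_pos_iff.mpr (hrows ik)
  have hGpos : (0:ℝ) < ‖g‖ ^ 2 := by positivity
  set r := F ik xk with hr
  set ve : Fin n → ℝ := fun j => xk j - xstar j with hve
  set E := ∑ j, ve j ^ 2 with hE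
  set D : Fin m → ℝ := fun i => ∑ j, grad i xk j * ve j with hD
  have hnormE : ‖xk - xstar‖ ^ 2 = E := by
    rw [EuclideanSpace.norm_eq, Real.sq_sqrt (by positivity), hE]
    refine Finset.sum_congr rfl fun j _ => ?_
    rw [Real.norm_eq_abs, sq_abs]
    rfl
  have htcc : ∀ i, |F i xk - D i| ≤ η * |F i xk| := by
    intro i
    have h := hltcc i xk xstar
    rw [hstar i, sub_zero] at h
    exact h
  have ha : ∀ i, (1 - η) * (F i xk) ^ 2 ≤ F i xk * D i := by
    intro i
    have h := htcc i
    have habs : |F i xk * (F i xk - D i)| ≤ η * (F i xk) ^ 2 := by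
      rw [abs_mul]
      calc |F i xk| * |F i xk - D i| ≤ |F i xk| * (η * |F i xk|) :=
            mul_le_mul_of_nonneg_left h (abs_nonneg _)
        _ = η * (F i xk) ^ 2 := by rw [← sq_abs]; ring
    have h2 := (abs_le.mp habs).2
    nlinarith [h2]
  have hb : ∀ i, (D i) ^ 2 ≤ (1 + η) ^ 2 * (F i xk) ^ 2 := by
    intro i
    have h := abs_le.mp (htcc i)
    have h2 : |D i| ≤ (1 + η) * |F i xk| := by
      rw [abs_le]
      constructor <;> nlinarith [le_abs_self (F i xk), neg_abs_le (F i xk), h.1, h.2]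
    calc (D i) ^ 2 = |D i| ^ 2 := (sq_abs _).symm
      _ ≤ ((1 + η) * |F i xk|) ^ 2 := pow_le_pow_left₀ (abs_nonneg _) h2 2
      _ = (1 + η) ^ 2 * (F i xk) ^ 2 := by rw [mul_pow, sq_abs]
  have hmulvec : ∀ i, (J *ᵥ ve) i = D i := by
    intro i
    simp [hJdef, Matrix.mulVec, dotProduct]
    rfl
  have hray : sigmaMin J ^ 2 * E ≤ ∑ i, (D i) ^ 2 := by
    have h := rayleigh_aux J ve
    rw [Finset.sum_congr rfl fun i _ => congrArg (· ^ 2) (hmulvec i)] at h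
    exact h
  have hsum2 : ∑ i, (D i) ^ 2 ≤ (1 + η) ^ 2 * ∑ i, (F i xk) ^ 2 := by
    rw [Finset.mul_sum]
    exact Finset.sum_le_sum fun i _ => hb i
  have hsum3 : ∑ i, (F i xk) ^ 2 ≤ m * r ^ 2 := by
    calc ∑ i, (F i xk) ^ 2 ≤ ∑ _i : Fin m, r ^ 2 := Finset.sum_le_sum fun i _ => hik i
      _ = m * r ^ 2 := by simp [Finset.sum_const, Finset.card_univ, nsmul_eq_mul]
  have hkey : sigmaMin J ^ 2 * E ≤ (1 + η) ^ 2 * m * r ^ 2 := by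
    calc sigmaMin J ^ 2 * E ≤ ∑ i, (D i) ^ 2 := hray
      _ ≤ (1 + η) ^ 2 * ∑ i, (F i xk) ^ 2 := hsum2
      _ ≤ (1 + η) ^ 2 * (m * r ^ 2) := mul_le_mul_of_nonneg_left hsum3 (by positivity)
      _ = (1 + η) ^ 2 * m * r ^ 2 := by ring
  have hf2 : frobNorm J ^ 2 = ∑ i, ∑ j, (J i j) ^ 2 := Real.sq_sqrt (by positivity)
  have hGsum : ‖g‖ ^ 2 = ∑ j, (J ik j) ^ 2 := by
    rw [EuclideanSpace.norm_eq, Real.sq_sqrt (by positivity)]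
    refine Finset.sum_congr rfl fun j _ => ?_
    rw [Real.norm_eq_abs, sq_abs]
    simp [hJdef, hg]
  have hGf : ‖g‖ ^ 2 ≤ frobNorm J ^ 2 := by
    rw [hf2, hGsum]
    exact Finset.single_le_sum (f := fun i => ∑ j, (J i j) ^ 2)
      (fun i _ => Finset.sum_nonneg fun j _ => sq_nonneg _) (Finset.mem_univ ik)
  have hσ : 0 < sigmaMin J := sigmaMin_pos hn J hrank
  have hfpos : 0 < frobNorm J ^ 2 := lt_of_lt_of_le hGpos hGf
  have hκ2 : kappaF J ^ 2 = frobNorm J ^ 2 / sigmaMin J ^ 2 := by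
    rw [kappaF, div_pow]
  set B := (1 + η) ^ 2 * (m : ℝ) ^ 2 * kappaF J ^ 2 with hBdef
  have hBval : B = (1 + η) ^ 2 * (m:ℝ) ^ 2 * (frobNorm J ^ 2 / sigmaMin J ^ 2) := by
    rw [hBdef, hκ2]
  have hBpos : 0 < B := by
    rw [hBval]
    exact mul_pos (mul_pos (by positivity) (by positivity))
      (div_pos hfpos (pow_pos hσ 2))
  have hEB : E / B ≤ r ^ 2 / ‖g‖ ^ 2 := by
    rw [div_le_div_iff₀ hBpos hGpos]
    have hchain : E * ‖g‖ ^ 2 * sigmaMin J ^ 2 ≤ r ^ 2 * B * sigmaMin J ^ 2 := by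
      have hmm : (m:ℝ) ≤ (m:ℝ) ^ 2 := by nlinarith [hm1]
      have e1 : E * ‖g‖ ^ 2 * sigmaMin J ^ 2 ≤ ((1 + η) ^ 2 * m * r ^ 2) * ‖g‖ ^ 2 := by
        nlinarith [hGpos.le, hkey]
      have e2 : ((1 + η) ^ 2 * m * r ^ 2) * ‖g‖ ^ 2
          ≤ (1 + η) ^ 2 * m * r ^ 2 * frobNorm J ^ 2 :=
        mul_le_mul_of_nonneg_left hGf (by positivity)
      have e3 : (1 + η) ^ 2 * (m:ℝ) * r ^ 2 * frobNorm J ^ 2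
          ≤ (1 + η) ^ 2 * (m:ℝ) ^ 2 * r ^ 2 * frobNorm J ^ 2 := by
        gcongr
      have e4 : r ^ 2 * B * sigmaMin J ^ 2
          = (1 + η) ^ 2 * (m:ℝ) ^ 2 * r ^ 2 * frobNorm J ^ 2 := by
        rw [hBval]
        field_simp
      linarith
    exact le_of_mul_le_mul_right hchain (pow_pos hσ 2)
  -- step 1
  have hx : xk1 - xstar = (xk - xstar) - (r / ‖g‖ ^ 2) • g := by
    rw [hupd]; module
  have hinner : (inner ℝ (xk - xstar) g : ℝ) = D ik := by
    rw [PiLp.inner_apply]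
    refine Finset.sum_congr rfl fun j _ => ?_
    simp [RCLike.inner_apply, mul_comm]
    rfl
  have hstep1 : ‖xk1 - xstar‖ ^ 2
      = E - 2 * (r / ‖g‖ ^ 2) * D ik + (r / ‖g‖ ^ 2) ^ 2 * ‖g‖ ^ 2 := by
    rw [hx, norm_sub_sq_real, real_inner_smul_right, hinner, norm_smul, hnormE,
      mul_pow, Real.norm_eq_abs, sq_abs]
    ring
  have hstep2 : ‖xk1 - xstar‖ ^ 2 ≤ E - (1 - 2 * η) * (r ^ 2 / ‖g‖ ^ 2) := by
    rw [hstep1]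
    have hai := ha ik
    have h2 : 2 * (r / ‖g‖ ^ 2) * D ik = 2 * (r * D ik) / ‖g‖ ^ 2 := by ring
    have h3 : (r / ‖g‖ ^ 2) ^ 2 * ‖g‖ ^ 2 = r ^ 2 / ‖g‖ ^ 2 := by
      field_simp
    rw [h2, h3]
    have h4 : (1 - 2 * η) * (r ^ 2 / ‖g‖ ^ 2) ≤ 2 * (r * D ik) / ‖g‖ ^ 2 - r ^ 2 / ‖g‖ ^ 2 := by
      rw [div_sub_div_same, ← mul_div_assoc]
      rw [div_le_div_iff₀ hGpos hGpos]
      nlinarith [hai, hGpos.le]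
    linarith
  -- finish
  rw [hnormE]
  have hfinal : (1 - (1 - 2 * η) / B) * E = E - (1 - 2 * η) * (E / B) := by ring
  rw [hfinal]
  have h5 : (1 - 2 * η) * (E / B) ≤ (1 - 2 * η) * (r ^ 2 / ‖g‖ ^ 2) :=
    mul_le_mul_of_nonneg_left hEB (by linarith)
  linarith
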